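/- If s ≥ 2 is even and a_k = 1/k! for 0 ≤ k ≤ s, then the coefficient b_{s/2+1} = ∑_{i=max(0,s+2-s)}^{min(s+2,s)} (-1)^{s/2+1+i} a_i a_{s+2-i} equals (-1)^{s/2+1} (2/(s+1)! - 2/(s+2)!), which is nonzero. -/

import Mathlib

open Finset

theorem leading_coefficient_taylor (s : ℕ) (hs : 2 ≤ s) (hse : Even s)
    (a : ℕ → ℝ) (ha : ∀ k ≤ s, a k = 1 / (Nat.factorial k : ℝ)) :
    (∑ i ∈ Finset.Icc (max 0 (s + 2 - s)) (min (s + 2) s),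
          (-1 : ℝ) ^ (s / 2 + 1 + i) * a i * a (s + 2 - i)) =
        (-1 : ℝ) ^ (s / 2 + 1) *
          (2 / (Nat.factorial (s + 1) : ℝ) - 2 / (Nat.factorial (s + 2) : ℝ)) ∧
      (-1 : ℝ) ^ (s / 2 + 1) *
          (2 / (Nat.factorial (s + 1) : ℝ) - 2 / (Nat.factorial (s + 2) : ℝ)) ≠ 0 := by
  have hmax : max 0 (s + 2 - s) = 2 := by omega
  have hmin : min (s + 2) s = s := by omega
  set g : ℕ → ℝ := fun i => (-1 : ℝ) ^ i * (1 / (Nat.factorial i : ℝ)) *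
      (1 / (Nat.factorial (s + 2 - i) : ℝ)) with hg
  -- full alternating sum is 0
  have hsum0 : ∑ i ∈ range (s + 3), g i = 0 := by
    have key : ∀ i ∈ range (s + 3),
        g i = ((-1 : ℝ) ^ i * ((s + 2).choose i : ℝ)) / (Nat.factorial (s + 2) : ℝ) := by
      intro i hi
      simp only [mem_range] at hi
      have hle : i ≤ s + 2 := by omega
      rw [Nat.cast_choose ℝ hle]
      have h1 : (Nat.factorial i : ℝ) ≠ 0 := Nat.cast_ne_zero.mpr (Nat.factorial_ne_zero i)
      have h2 : (Nat.factorial (s + 2 - i) : ℝ) ≠ 0 :=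
        Nat.cast_ne_zero.mpr (Nat.factorial_ne_zero _)
      have h3 : (Nat.factorial (s + 2) : ℝ) ≠ 0 :=
        Nat.cast_ne_zero.mpr (Nat.factorial_ne_zero _)
      simp only [hg]
      field_simp
    rw [sum_congr rfl key, ← sum_div]
    have hz : ∑ i ∈ range (s + 3), ((-1 : ℝ) ^ i * ((s + 2).choose i : ℝ)) = 0 := by
      have h := Int.alternating_sum_range_choose (n := s + 2)
      have h' := congrArg (Int.cast : ℤ → ℝ) h
      push_cast at h'
      simpa using h'
    rw [hz]; simp
  -- peel off boundary terms
  have hdec : ∑ i ∈ range (s + 3), g i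
      = g 0 + g 1 + (∑ i ∈ Finset.Icc 2 s, g i) + g (s + 1) + g (s + 2) := by
    rw [sum_range_succ, sum_range_succ]
    have h1 : (2 : ℕ) ≤ s + 1 := by omega
    have h2 : (Finset.Icc 2 s) = Finset.Ico 2 (s + 1) := by
      rw [Finset.Ico_add_one_right_eq_Icc]
    rw [h2]
    have := Finset.sum_Ico_consecutive g (Nat.zero_le 2) h1
    rw [← Finset.range_eq_Ico] at *
    have h3 : ∑ i ∈ range (s + 1), g i = ∑ i ∈ range 2, g i + ∑ i ∈ Finset.Ico 2 (s+1), g i := by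
      rw [Finset.range_eq_Ico]
      exact (Finset.sum_Ico_consecutive g (Nat.zero_le 2) h1).symm
    rw [h3]
    simp [sum_range_succ]
    try ring
  have hneg1s : (-1 : ℝ) ^ s = 1 := hse.neg_one_pow
  have hg0 : g 0 = 1 / (Nat.factorial (s + 2) : ℝ) := by simp [hg]
  have hg1 : g 1 = -(1 / (Nat.factorial (s + 1) : ℝ)) := by
    simp [hg, Nat.succ_sub_one]
  have hgs1 : g (s + 1) = -(1 / (Nat.factorial (s + 1) : ℝ)) := by
    have : s + 2 - (s + 1) = 1 := by omega
    simp [hg, this, pow_succ, hneg1s]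
  have hgs2 : g (s + 2) = 1 / (Nat.factorial (s + 2) : ℝ) := by
    have : s + 2 - (s + 2) = 0 := by omega
    simp [hg, this, pow_succ, hneg1s]
  have hmid : ∑ i ∈ Finset.Icc 2 s, g i
      = 2 / (Nat.factorial (s + 1) : ℝ) - 2 / (Nat.factorial (s + 2) : ℝ) := by
    have := hsum0
    rw [hdec, hg0, hg1, hgs1, hgs2] at this
    have e1 : 2 / (Nat.factorial (s + 1) : ℝ) = 1 / (Nat.factorial (s + 1) : ℝ) + 1 / (Nat.factorial (s + 1) : ℝ) := by ring
    have e2 : 2 / (Nat.factorial (s + 2) : ℝ) = 1 / (Nat.factorial (s + 2) : ℝ) + 1 / (Nat.factorial (s + 2) : ℝ) := by ring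
    rw [e1, e2]
    linarith
  constructor
  · rw [hmax, hmin, ← hmid]
    rw [Finset.mul_sum]
    apply Finset.sum_congr rfl
    intro i hi
    simp only [Finset.mem_Icc] at hi
    have hi1 : i ≤ s := hi.2
    have hi2 : s + 2 - i ≤ s := by omega
    rw [ha i hi1, ha _ hi2, pow_add, hg]
    ring
  · have hlt : (Nat.factorial (s + 1) : ℝ) < (Nat.factorial (s + 2) : ℝ) := by
      exact_mod_cast Nat.factorial_lt (by omega) |>.mpr (by omega)
    have hpos : (0 : ℝ) < Nat.factorial (s + 1) := by positivity
    have h1 : 2 / (Nat.factorial (s + 2) : ℝ) < 2 / (Nat.factorial (s + 1) : ℝ) :=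
      div_lt_div_of_pos_left (by norm_num) hpos hlt
    have h2 : (-1 : ℝ) ^ (s / 2 + 1) ≠ 0 := by
      simp [pow_ne_zero]
    intro h
    rcases mul_eq_zero.mp h with h | h
    · exact h2 h
    · linarith
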